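/- Let E and F be measurable spaces, let ν be a probability measure on E, and let κ, η be Markov kernels from E to F. For each x ∈ E let m(x) := (1/2) • (κ(x) + η(x)). Let D : E × F → ℝ be measurable with 0 < D(x, y) < 1 for all (x, y). Assume log(D) is integrable with respect to the composition-product measure ν ⊗ₘ κ, log(1 − D) is integrable with respect to ν ⊗ₘ η, and the function x ↦ (klDiv (κ x) (m x)).toReal + (klDiv (η x) (m x)).toReal is measurable and ν-integrable. Then ∫ log D d(ν ⊗ₘ κ) + ∫ log(1 − D) d(ν ⊗ₘ η) ≤ −log 4 + ∫ ((klDiv (κ x) (m x)).toReal + (klDiv (η x) (m x)).toReal) dν(x). -/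

import Mathlib

open MeasureTheory ProbabilityTheory
open scoped ENNReal

-- The Kullback–Leibler divergence between two measures: `∫ log (dP/dM) dP` when `P ≪ M`
-- and the log-likelihood ratio is `P`-integrable, and `+∞` otherwise.
open Classical in
noncomputable def klDiv {α : Type*} [MeasurableSpace α] (P M : Measure α) : EReal :=
  if P ≪ M ∧ Integrable (fun x => Real.log (P.rnDeriv M x).toReal) P
  then ((∫ x, Real.log (P.rnDeriv M x).toReal ∂P : ℝ) : EReal)
  else ⊤

/-- `a * log s ≤ 2s - a - a log 2 + a log a` for `a ≥ 0`, `s > 0`. -/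
lemma gan_log_aux {a s : ℝ} (ha : 0 ≤ a) (hs : 0 < s) :
    a * Real.log s ≤ 2 * s - a - a * Real.log 2 + a * Real.log a := by
  rcases eq_or_lt_of_le ha with h | h
  · simp only [← h, zero_mul, sub_zero, add_zero]
    linarith
  · have h1 : Real.log (2 * s / a) ≤ 2 * s / a - 1 :=
      Real.log_le_sub_one_of_pos (by positivity)
    have h2 : Real.log (2 * s / a) = Real.log 2 + Real.log s - Real.log a := by
      rw [Real.log_div (by positivity) (ne_of_gt h), Real.log_mul two_ne_zero (ne_of_gt hs)]
    have h3 := mul_le_mul_of_nonneg_left h1 ha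
    rw [h2] at h3
    have h4 : a * (2 * s / a - 1) = 2 * s - a := by field_simp
    nlinarith
  
/-- The pointwise inequality behind the GAN bound. -/
lemma gan_pointwise_aux {a b t : ℝ} (ha : 0 ≤ a) (hb : 0 ≤ b) (hab : a + b = 2)
    (ht0 : 0 < t) (ht1 : t < 1) :
    a * Real.log t + b * Real.log (1 - t) ≤
      a * Real.log a + b * Real.log b - Real.log 4 := by
  have h1 := gan_log_aux ha ht0
  have h2 := gan_log_aux hb (by linarith : (0:ℝ) < 1 - t)
  have h4 : Real.log 4 = 2 * Real.log 2 := by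
    rw [show (4:ℝ) = 2 ^ 2 by norm_num, Real.log_pow]
    push_cast; ring
  have h5 : a * Real.log 2 + b * Real.log 2 = 2 * Real.log 2 := by
    rw [← add_mul, hab]
  linarith

/-- `|t log t| ≤ 2` on `[0, 2]`. -/
lemma gan_abs_mul_log_le {t : ℝ} (h0 : 0 ≤ t) (h2 : t ≤ 2) : |t * Real.log t| ≤ 2 := by
  rcases eq_or_lt_of_le h0 with h | h
  · simp [← h]
  rcases le_or_gt 1 t with h1 | h1
  · have hl0 : 0 ≤ Real.log t := Real.log_nonneg h1
    have hl : Real.log t ≤ t - 1 := Real.log_le_sub_one_of_pos h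
    rw [abs_of_nonneg (by positivity)]
    nlinarith
  · have hl : Real.log t⁻¹ ≤ t⁻¹ - 1 := Real.log_le_sub_one_of_pos (by positivity)
    rw [Real.log_inv] at hl
    have hneg : Real.log t ≤ 0 := Real.log_nonpos h0 h1.le
    rw [abs_of_nonpos (mul_nonpos_of_nonneg_of_nonpos h0 hneg)]
    have h3 := mul_le_mul_of_nonneg_left hl h0
    have h4 : t * (t⁻¹ - 1) = 1 - t := by field_simp
    nlinarith

/-- The per-point GAN value bound, for two probability measures. -/
lemma gan_measure_aux {F : Type*} [MeasurableSpace F] (P Q : Measure F)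
    [IsProbabilityMeasure P] [IsProbabilityMeasure Q]
    (d : F → ℝ) (hd01 : ∀ y, 0 < d y ∧ d y < 1)
    (hP : Integrable (fun y => Real.log (d y)) P)
    (hQ : Integrable (fun y => Real.log (1 - d y)) Q) :
    ∫ y, Real.log (d y) ∂P + ∫ y, Real.log (1 - d y) ∂Q ≤
      -Real.log 4 + ((klDiv P ((1/2 : ℝ≥0∞) • (P + Q))).toReal
        + (klDiv Q ((1/2 : ℝ≥0∞) • (P + Q))).toReal) := by
  set M : Measure F := (1/2 : ℝ≥0∞) • (P + Q) with hMdef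
  have h2ne : (1/2 : ℝ≥0∞) ≠ 0 := by norm_num
  have hMP : IsProbabilityMeasure M := by
    constructor
    rw [hMdef]
    simp only [Measure.smul_apply, Measure.add_apply, measure_univ, smul_eq_mul]
    rw [one_add_one_eq_two, one_div, ENNReal.inv_mul_cancel two_ne_zero ENNReal.ofNat_ne_top]
  have h2M : (2 : ℝ≥0∞) • M = P + Q := by
    rw [hMdef, smul_smul, show (2 : ℝ≥0∞) * (1/2) = 1 by
      rw [one_div, ENNReal.mul_inv_cancel two_ne_zero ENNReal.ofNat_ne_top], one_smul]
  have hPM : P ≪ M :=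
    (Measure.absolutelyContinuous_of_le (Measure.le_add_right le_rfl)).trans
      (Measure.absolutelyContinuous_smul h2ne)
  have hQM : Q ≪ M :=
    (Measure.absolutelyContinuous_of_le (Measure.le_add_left le_rfl)).trans
      (Measure.absolutelyContinuous_smul h2ne)
  -- p + q = 2 a.e.
  have hsum : P.rnDeriv M + Q.rnDeriv M =ᵐ[M] fun _ => (2 : ℝ≥0∞) := by
    have hadd := Measure.rnDeriv_add P Q M
    have hPQ : (P + Q).rnDeriv M =ᵐ[M] fun _ => (2 : ℝ≥0∞) := by
      rw [← h2M]
      filter_upwards [Measure.rnDeriv_smul_left_of_ne_top M M (ENNReal.ofNat_ne_top (n := 2)),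
        Measure.rnDeriv_self M] with y h1 h2
      rw [h1]
      simp [h2]
    filter_upwards [hadd, hPQ] with y h1 h2
    rw [← h1, h2]
  have habM : ∀ᵐ y ∂M, (P.rnDeriv M y).toReal + (Q.rnDeriv M y).toReal = 2 := by
    filter_upwards [hsum, Measure.rnDeriv_lt_top P M, Measure.rnDeriv_lt_top Q M]
      with y h hp hq
    have : ((P.rnDeriv M y) + (Q.rnDeriv M y)).toReal = (2 : ℝ≥0∞).toReal := by
      rw [show P.rnDeriv M y + Q.rnDeriv M y = (2 : ℝ≥0∞) from h]
    rwa [ENNReal.toReal_add hp.ne hq.ne, ENNReal.toReal_ofNat] at this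
  -- integrability of p log p and q log q over M
  have hmeasP : Measurable fun y =>
      (P.rnDeriv M y).toReal * Real.log (P.rnDeriv M y).toReal :=
    (Measure.measurable_rnDeriv P M).ennreal_toReal.mul
      (Real.measurable_log.comp (Measure.measurable_rnDeriv P M).ennreal_toReal)
  have hmeasQ : Measurable fun y =>
      (Q.rnDeriv M y).toReal * Real.log (Q.rnDeriv M y).toReal :=
    (Measure.measurable_rnDeriv Q M).ennreal_toReal.mul
      (Real.measurable_log.comp (Measure.measurable_rnDeriv Q M).ennreal_toReal)
  have hC : Integrable (fun y =>
      (P.rnDeriv M y).toReal * Real.log (P.rnDeriv M y).toReal) M := by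
    refine Integrable.mono' (integrable_const (2 : ℝ)) hmeasP.aestronglyMeasurable ?_
    filter_upwards [habM] with y hy
    rw [Real.norm_eq_abs]
    exact gan_abs_mul_log_le ENNReal.toReal_nonneg
      (by have := ENNReal.toReal_nonneg (a := Q.rnDeriv M y); linarith)
  have hD : Integrable (fun y =>
      (Q.rnDeriv M y).toReal * Real.log (Q.rnDeriv M y).toReal) M := by
    refine Integrable.mono' (integrable_const (2 : ℝ)) hmeasQ.aestronglyMeasurable ?_
    filter_upwards [habM] with y hy
    rw [Real.norm_eq_abs]
    exact gan_abs_mul_log_le ENNReal.toReal_nonneg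
      (by have := ENNReal.toReal_nonneg (a := P.rnDeriv M y); linarith)
  have hintp : Integrable (fun y => Real.log (P.rnDeriv M y).toReal) P := by
    rw [← MeasureTheory.integrable_rnDeriv_smul_iff hPM]
    simpa [smul_eq_mul] using hC
  have hintq : Integrable (fun y => Real.log (Q.rnDeriv M y).toReal) Q := by
    rw [← MeasureTheory.integrable_rnDeriv_smul_iff hQM]
    simpa [smul_eq_mul] using hD
  have hklP : (klDiv P M).toReal = ∫ y, Real.log (P.rnDeriv M y).toReal ∂P := by
    rw [klDiv, if_pos ⟨hPM, hintp⟩, EReal.toReal_coe]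
  have hklQ : (klDiv Q M).toReal = ∫ y, Real.log (Q.rnDeriv M y).toReal ∂Q := by
    rw [klDiv, if_pos ⟨hQM, hintq⟩, EReal.toReal_coe]
  -- transfer integrals to M
  have iA : Integrable (fun y => (P.rnDeriv M y).toReal • Real.log (d y)) M :=
    (MeasureTheory.integrable_rnDeriv_smul_iff hPM).mpr hP
  have iB : Integrable (fun y => (Q.rnDeriv M y).toReal • Real.log (1 - d y)) M :=
    (MeasureTheory.integrable_rnDeriv_smul_iff hQM).mpr hQ
  have eA : ∫ y, Real.log (d y) ∂P
      = ∫ y, (P.rnDeriv M y).toReal • Real.log (d y) ∂M :=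
    (MeasureTheory.integral_rnDeriv_smul hPM).symm
  have eB : ∫ y, Real.log (1 - d y) ∂Q
      = ∫ y, (Q.rnDeriv M y).toReal • Real.log (1 - d y) ∂M :=
    (MeasureTheory.integral_rnDeriv_smul hQM).symm
  have eC : ∫ y, Real.log (P.rnDeriv M y).toReal ∂P
      = ∫ y, (P.rnDeriv M y).toReal • Real.log (P.rnDeriv M y).toReal ∂M :=
    (MeasureTheory.integral_rnDeriv_smul hPM).symm
  have eD : ∫ y, Real.log (Q.rnDeriv M y).toReal ∂Q
      = ∫ y, (Q.rnDeriv M y).toReal • Real.log (Q.rnDeriv M y).toReal ∂M :=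
    (MeasureTheory.integral_rnDeriv_smul hQM).symm
  -- a.e. pointwise inequality
  have hae : ∀ᵐ y ∂M,
      (P.rnDeriv M y).toReal • Real.log (d y)
        + (Q.rnDeriv M y).toReal • Real.log (1 - d y) ≤
      ((P.rnDeriv M y).toReal * Real.log (P.rnDeriv M y).toReal
        + (Q.rnDeriv M y).toReal * Real.log (Q.rnDeriv M y).toReal) - Real.log 4 := by
    filter_upwards [habM] with y hy
    simpa [smul_eq_mul] using
      gan_pointwise_aux ENNReal.toReal_nonneg ENNReal.toReal_nonneg hy
        (hd01 y).1 (hd01 y).2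
  have hCD : Integrable (fun y =>
      ((P.rnDeriv M y).toReal * Real.log (P.rnDeriv M y).toReal
        + (Q.rnDeriv M y).toReal * Real.log (Q.rnDeriv M y).toReal) - Real.log 4) M :=
    (hC.add hD).sub (integrable_const _)
  have key := integral_mono_ae (iA.add iB) hCD hae
  simp only [Pi.add_apply] at key
  rw [integral_add iA iB] at key
  have e1 : ∫ y, (((P.rnDeriv M y).toReal * Real.log (P.rnDeriv M y).toReal
        + (Q.rnDeriv M y).toReal * Real.log (Q.rnDeriv M y).toReal) - Real.log 4) ∂M
      = (∫ y, (P.rnDeriv M y).toReal * Real.log (P.rnDeriv M y).toReal ∂M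
        + ∫ y, (Q.rnDeriv M y).toReal * Real.log (Q.rnDeriv M y).toReal ∂M) - Real.log 4 := by
    rw [integral_sub _ (integrable_const _), integral_add hC hD, integral_const, probReal_univ]
    · simp
    · exact hC.add hD
  rw [e1] at key
  rw [eA, eB, hklP, hklQ, eC, eD]
  simp only [smul_eq_mul] at key ⊢
  linarith

theorem conditional_gan_value_le
    {E F : Type*} [MeasurableSpace E] [MeasurableSpace F]
    (ν : Measure E) [IsProbabilityMeasure ν]
    (κ η : Kernel E F) [IsMarkovKernel κ] [IsMarkovKernel η]
    (m : E → Measure F) (hm : ∀ x, m x = (1 / 2 : ℝ≥0∞) • (κ x + η x))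
    (D : E × F → ℝ) (hD : Measurable D)
    (hD01 : ∀ p : E × F, 0 < D p ∧ D p < 1)
    (hintD : Integrable (fun p => Real.log (D p)) (ν ⊗ₘ κ))
    (hintD' : Integrable (fun p => Real.log (1 - D p)) (ν ⊗ₘ η))
    (hmeas : Measurable fun x =>
      (klDiv (κ x) (m x)).toReal + (klDiv (η x) (m x)).toReal)
    (hint : Integrable (fun x =>
      (klDiv (κ x) (m x)).toReal + (klDiv (η x) (m x)).toReal) ν) :
    (∫ p, Real.log (D p) ∂(ν ⊗ₘ κ)) + ∫ p, Real.log (1 - D p) ∂(ν ⊗ₘ η) ≤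
      -Real.log 4 +
        ∫ x, ((klDiv (κ x) (m x)).toReal + (klDiv (η x) (m x)).toReal) ∂ν := by
  -- a.e. integrability of slices
  have haeP : ∀ᵐ x ∂ν, Integrable (fun y => Real.log (D (x, y))) (κ x) :=
    ((Measure.integrable_compProd_iff hintD.aestronglyMeasurable).mp hintD).1
  have haeQ : ∀ᵐ x ∂ν, Integrable (fun y => Real.log (1 - D (x, y))) (η x) :=
    ((Measure.integrable_compProd_iff hintD'.aestronglyMeasurable).mp hintD').1
  -- integrability of the inner integrals
  have I1 : Integrable (fun x => ∫ y, Real.log (D (x, y)) ∂κ x) ν := by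
    have h : Integrable (fun p => Real.log (D p))
        ((Kernel.const Unit ν ⊗ₖ Kernel.prodMkLeft Unit κ) ()) := hintD
    have h2 := h.integral_compProd
    simpa using h2
  have I2 : Integrable (fun x => ∫ y, Real.log (1 - D (x, y)) ∂η x) ν := by
    have h : Integrable (fun p => Real.log (1 - D p))
        ((Kernel.const Unit ν ⊗ₖ Kernel.prodMkLeft Unit η) ()) := hintD'
    have h2 := h.integral_compProd
    simpa using h2
  rw [Measure.integral_compProd hintD, Measure.integral_compProd hintD',
    ← integral_add I1 I2]
  have key : ∀ᵐ x ∂ν,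
      (∫ y, Real.log (D (x, y)) ∂κ x) + ∫ y, Real.log (1 - D (x, y)) ∂η x ≤
        -Real.log 4 + ((klDiv (κ x) (m x)).toReal + (klDiv (η x) (m x)).toReal) := by
    filter_upwards [haeP, haeQ] with x h1 h2
    rw [hm x]
    exact gan_measure_aux (κ x) (η x) (fun y => D (x, y)) (fun y => hD01 (x, y)) h1 h2
  calc ∫ x, ((∫ y, Real.log (D (x, y)) ∂κ x) + ∫ y, Real.log (1 - D (x, y)) ∂η x) ∂ν
      ≤ ∫ x, (-Real.log 4
          + ((klDiv (κ x) (m x)).toReal + (klDiv (η x) (m x)).toReal)) ∂ν :=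
        integral_mono_ae (I1.add I2) ((integrable_const _).add hint) key
    _ = -Real.log 4 + ∫ x, ((klDiv (κ x) (m x)).toReal
          + (klDiv (η x) (m x)).toReal) ∂ν := by
        rw [integral_add (integrable_const _) hint, integral_const, probReal_univ]
        simp
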